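/- For every q with 0 < q < 1 and every x > 0 with x ≠ 1, one has ψ_q(x) + ψ_q(1/x) < 2·ψ_q(1). -/

import Mathlib

open Real

open Set


private lemma coeff_lemma (q : ℝ) (hq0 : 0 ≤ q) : ∀ n : ℕ,
    0 ≤ 1 - ((n : ℝ) + 1) * q ^ n + (n : ℝ) * q ^ (n + 1) := by
  intro n
  induction n with
  | zero => simp
  | succ m ih =>
      have h1 : (0:ℝ) ≤ ((m:ℝ) + 1) * q ^ m * (1 - q) ^ 2 := by positivity
      have : 1 - ((m:ℝ) + 1 + 1) * q ^ (m + 1) + ((m:ℝ) + 1) * q ^ (m + 2)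
          = (1 - ((m:ℝ) + 1) * q ^ m + (m : ℝ) * q ^ (m + 1))
            + ((m:ℝ) + 1) * q ^ m * (1 - q) ^ 2 := by ring
      push_cast
      rw [this]
      linarith

private lemma summable_master (q : ℝ) (hq0 : 0 < q) (hq1 : q < 1) (y : ℝ) (hy : 0 < y)
    (k : ℕ) :
    Summable (fun n : ℕ => ((n : ℝ) + 1) ^ k * q ^ (((n : ℝ) + 1) * y) / (1 - q ^ ((n : ℝ) + 1))) := by
  have hr : q ^ y < 1 := Real.rpow_lt_one hq0.le hq1 hy
  have hr0 : 0 ≤ q ^ y := Real.rpow_nonneg hq0.le y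
  have habs : ‖q ^ y‖ < 1 := by rwa [Real.norm_eq_abs, abs_of_nonneg hr0]
  have hgeo : Summable (fun n : ℕ => ((n:ℝ) + 1) ^ k * (q ^ y) ^ (n + 1) / (1 - q)) := by
    apply Summable.div_const
    have h0 : Summable (fun n : ℕ => (n : ℝ) ^ k * (q ^ y) ^ n) :=
      summable_pow_mul_geometric_of_norm_lt_one k habs
    have := (summable_nat_add_iff 1).2 h0
    simpa using this
  apply Summable.of_nonneg_of_le _ _ hgeo
  · intro n
    have hd : q ^ ((n : ℝ) + 1) < 1 := Real.rpow_lt_one hq0.le hq1 (by positivity)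
    have : (0:ℝ) < 1 - q ^ ((n : ℝ) + 1) := by linarith
    positivity
  · intro n
    have h1 : q ^ ((n : ℝ) + 1) ≤ q := by
      have := Real.rpow_le_rpow_of_exponent_ge hq0 hq1.le
        (show (1:ℝ) ≤ (n : ℝ) + 1 by linarith [Nat.cast_nonneg (α := ℝ) n])
      simpa using this
    have h2 : (0:ℝ) < 1 - q := by linarith
    have h3 : q ^ (((n : ℝ) + 1) * y) = (q ^ y) ^ (n + 1) := by
      rw [mul_comm, Real.rpow_mul hq0.le,
        show ((n : ℝ) + 1) = ((n + 1 : ℕ) : ℝ) by push_cast; ring, Real.rpow_natCast]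
    rw [h3, div_le_div_iff₀ (by linarith) h2]
    have hnum : (0:ℝ) ≤ ((n:ℝ) + 1) ^ k * (q ^ y) ^ (n + 1) := by positivity
    nlinarith [mul_nonneg hnum (sub_nonneg.2 h1), mul_nonneg hnum hq0.le]

/-- denominator positivity -/
private lemma denom_pos (q : ℝ) (hq0 : 0 < q) (hq1 : q < 1) (n : ℕ) :
    (0:ℝ) < 1 - q ^ ((n : ℝ) + 1) := by
  have hd : q ^ ((n : ℝ) + 1) < 1 := Real.rpow_lt_one hq0.le hq1 (by positivity)
  linarith

section Deriv

variable (q : ℝ)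

/-- `A q y = ∑ (n+1) q^{(n+1)y}/(1-q^{n+1})`, the negated normalized derivative of `S`. -/
private noncomputable def Aq (y : ℝ) : ℝ :=
    ∑' n : ℕ, ((n : ℝ) + 1) * q ^ (((n : ℝ) + 1) * y) / (1 - q ^ ((n : ℝ) + 1))

private noncomputable def Bq (y : ℝ) : ℝ :=
    ∑' n : ℕ, ((n : ℝ) + 1) ^ 2 * q ^ (((n : ℝ) + 1) * y) / (1 - q ^ ((n : ℝ) + 1))

variable {q}

private lemma hasDerivAt_rpow_term (hq0 : 0 < q) (a y : ℝ) :
    HasDerivAt (fun z : ℝ => q ^ (a * z)) (Real.log q * a * q ^ (a * y)) y := by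
  have h1 : HasDerivAt (fun x : ℝ => q ^ x) (q ^ (a * y) * Real.log q) (a * y) :=
    (Real.hasStrictDerivAt_const_rpow hq0 (a * y)).hasDerivAt
  have h2 : HasDerivAt (fun z : ℝ => a * z) a y := by
    simpa using (hasDerivAt_id y).const_mul a
  have := h1.comp y h2
  exact this.congr_deriv (by ring)

private lemma hasDerivAt_S (hq0 : 0 < q) (hq1 : q < 1) {y : ℝ} (hy : 0 < y) :
    HasDerivAt (fun z : ℝ => ∑' n : ℕ, q ^ (((n : ℝ) + 1) * z) / (1 - q ^ ((n : ℝ) + 1)))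
      (Real.log q * Aq q y) y := by
  have hlogq : Real.log q < 0 := Real.log_neg hq0 hq1
  set u : ℕ → ℝ := fun n =>
    (-Real.log q) * (((n : ℝ) + 1) * q ^ (((n : ℝ) + 1) * (y / 2)) / (1 - q ^ ((n : ℝ) + 1)))
    with hu
  have husum : Summable u := by
    apply Summable.mul_left
    simpa using summable_master q hq0 hq1 (y / 2) (by linarith) 1
  have key : HasDerivAt (fun z : ℝ => ∑' n : ℕ, q ^ (((n : ℝ) + 1) * z) / (1 - q ^ ((n : ℝ) + 1)))
      (∑' n : ℕ, Real.log q * (((n : ℝ) + 1)) * q ^ (((n : ℝ) + 1) * y) / (1 - q ^ ((n : ℝ) + 1))) y := by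
    apply hasDerivAt_tsum_of_isPreconnected husum isOpen_Ioi (isPreconnected_Ioi)
      (g := fun (n : ℕ) (z : ℝ) => q ^ (((n : ℝ) + 1) * z) / (1 - q ^ ((n : ℝ) + 1)))
      (g' := fun (n : ℕ) (z : ℝ) =>
        Real.log q * (((n : ℝ) + 1)) * q ^ (((n : ℝ) + 1) * z) / (1 - q ^ ((n : ℝ) + 1)))
      (y₀ := y)
    · intro n z _
      exact (hasDerivAt_rpow_term hq0 ((n : ℝ) + 1) z).div_const _
    · intro n z hz
      have hd := denom_pos q hq0 hq1 n
      have hmono : q ^ (((n : ℝ) + 1) * z) ≤ q ^ (((n : ℝ) + 1) * (y / 2)) := by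
        apply Real.rpow_le_rpow_of_exponent_ge hq0 hq1.le
        have : y / 2 ≤ z := le_of_lt hz
        nlinarith [Nat.cast_nonneg (α := ℝ) n]
      have h1 : (0:ℝ) ≤ -Real.log q := by linarith
      have hpz : (0:ℝ) < q ^ (((n : ℝ) + 1) * z) := Real.rpow_pos_of_pos hq0 _
      have hnorm : ‖Real.log q * ((n : ℝ) + 1) * q ^ (((n : ℝ) + 1) * z) / (1 - q ^ ((n : ℝ) + 1))‖
          = (-Real.log q) * (((n : ℝ) + 1) * q ^ (((n : ℝ) + 1) * z) / (1 - q ^ ((n : ℝ) + 1))) := by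
        rw [Real.norm_eq_abs, abs_of_nonpos]
        · ring
        · apply div_nonpos_of_nonpos_of_nonneg _ hd.le
          have : (0:ℝ) ≤ ((n : ℝ) + 1) * q ^ (((n : ℝ) + 1) * z) := by positivity
          nlinarith
      rw [hnorm, hu]
      apply mul_le_mul_of_nonneg_left _ h1
      exact (div_le_div_iff_of_pos_right hd).mpr
        (mul_le_mul_of_nonneg_left hmono (by positivity))
    · exact Set.mem_Ioi.2 (by linarith)
    · exact (summable_master q hq0 hq1 y hy 0).congr (by intro n; simp)
    · exact Set.mem_Ioi.2 (by linarith)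
  convert key using 1
  rw [Aq, ← tsum_mul_left]
  congr 1; funext n; ring

end Deriv

section Part3
variable {q : ℝ}

private lemma hasDerivAt_A (hq0 : 0 < q) (hq1 : q < 1) {y : ℝ} (hy : 0 < y) :
    HasDerivAt (Aq q) (Real.log q * Bq q y) y := by
  have hlogq : Real.log q < 0 := Real.log_neg hq0 hq1
  set u : ℕ → ℝ := fun n =>
    (-Real.log q) * (((n : ℝ) + 1) ^ 2 * q ^ (((n : ℝ) + 1) * (y / 2)) / (1 - q ^ ((n : ℝ) + 1)))
    with hu
  have husum : Summable u := by
    apply Summable.mul_left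
    exact summable_master q hq0 hq1 (y / 2) (by linarith) 2
  have key : HasDerivAt (fun z : ℝ => ∑' n : ℕ, ((n : ℝ) + 1) * q ^ (((n : ℝ) + 1) * z) / (1 - q ^ ((n : ℝ) + 1)))
      (∑' n : ℕ, Real.log q * ((n : ℝ) + 1) ^ 2 * q ^ (((n : ℝ) + 1) * y) / (1 - q ^ ((n : ℝ) + 1))) y := by
    apply hasDerivAt_tsum_of_isPreconnected husum isOpen_Ioi (isPreconnected_Ioi)
      (g := fun (n : ℕ) (z : ℝ) => ((n : ℝ) + 1) * q ^ (((n : ℝ) + 1) * z) / (1 - q ^ ((n : ℝ) + 1)))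
      (g' := fun (n : ℕ) (z : ℝ) =>
        Real.log q * ((n : ℝ) + 1) ^ 2 * q ^ (((n : ℝ) + 1) * z) / (1 - q ^ ((n : ℝ) + 1)))
      (y₀ := y)
    · intro n z _
      have h := ((hasDerivAt_rpow_term hq0 ((n : ℝ) + 1) z).const_mul ((n : ℝ) + 1)).div_const
        (1 - q ^ ((n : ℝ) + 1))
      exact h.congr_deriv (by ring)
    · intro n z hz
      have hd := denom_pos q hq0 hq1 n
      have hmono : q ^ (((n : ℝ) + 1) * z) ≤ q ^ (((n : ℝ) + 1) * (y / 2)) := by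
        apply Real.rpow_le_rpow_of_exponent_ge hq0 hq1.le
        have : y / 2 ≤ z := le_of_lt hz
        nlinarith [Nat.cast_nonneg (α := ℝ) n]
      have h1 : (0:ℝ) ≤ -Real.log q := by linarith
      have hpz : (0:ℝ) < q ^ (((n : ℝ) + 1) * z) := Real.rpow_pos_of_pos hq0 _
      have hnorm : ‖Real.log q * ((n : ℝ) + 1) ^ 2 * q ^ (((n : ℝ) + 1) * z) / (1 - q ^ ((n : ℝ) + 1))‖
          = (-Real.log q) * (((n : ℝ) + 1) ^ 2 * q ^ (((n : ℝ) + 1) * z) / (1 - q ^ ((n : ℝ) + 1))) := by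
        rw [Real.norm_eq_abs, abs_of_nonpos]
        · ring
        · apply div_nonpos_of_nonpos_of_nonneg _ hd.le
          have : (0:ℝ) ≤ ((n : ℝ) + 1) ^ 2 * q ^ (((n : ℝ) + 1) * z) := by positivity
          nlinarith
      rw [hnorm, hu]
      apply mul_le_mul_of_nonneg_left _ h1
      exact (div_le_div_iff_of_pos_right hd).mpr (mul_le_mul_of_nonneg_left hmono (by positivity))
    · exact Set.mem_Ioi.2 (by linarith)
    · exact summable_master q hq0 hq1 y hy 1 |>.congr (by intro n; simp)
    · exact Set.mem_Ioi.2 (by linarith)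
  have : HasDerivAt (Aq q)
      (∑' n : ℕ, Real.log q * ((n : ℝ) + 1) ^ 2 * q ^ (((n : ℝ) + 1) * y) / (1 - q ^ ((n : ℝ) + 1))) y := by
    apply key.congr_of_eventuallyEq
    filter_upwards with z
    rfl
  convert this using 1
  rw [Bq, ← tsum_mul_left]
  congr 1; funext n; ring

end Part3


section Part4
variable {q : ℝ}

private lemma rpow_nat_eq (hq0 : 0 < q) (l : ℝ) (n : ℕ) :
    q ^ (((n : ℝ) + 1) * l) = (q ^ l) ^ (n + 1) := by
  rw [mul_comm, Real.rpow_mul hq0.le,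
    show ((n : ℝ) + 1) = ((n + 1 : ℕ) : ℝ) by push_cast; ring, Real.rpow_natCast]

private lemma Bq_pos (hq0 : 0 < q) (hq1 : q < 1) {l : ℝ} (hl : 0 < l) : 0 < Bq q l := by
  apply Summable.tsum_pos (summable_master q hq0 hq1 l hl 2) _ 0
  · exact div_pos (by positivity) (denom_pos q hq0 hq1 0)
  · intro n
    exact div_nonneg (by positivity) (denom_pos q hq0 hq1 n).le

private lemma A_le (hq0 : 0 < q) (hq1 : q < 1) {l : ℝ} (hl : 0 < l) :
    Aq q l ≤ (1 - q ^ l) * Bq q l := by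
  set z := q ^ l with hz
  have hz0 : 0 < z := Real.rpow_pos_of_pos hq0 l
  have hz1 : z < 1 := Real.rpow_lt_one hq0.le hq1 hl
  set G : ℕ → ℝ := fun m => (m : ℝ) ^ 2 * z ^ (m + 1) / (1 - q ^ (m : ℝ)) with hG
  have hQequiv : ∀ n : ℕ, ((n : ℝ) + 1) ^ 2 * q ^ (((n : ℝ) + 1) * l) / (1 - q ^ ((n : ℝ) + 1))
      = ((n : ℝ) + 1) ^ 2 * z ^ (n + 1) / (1 - q ^ ((n : ℝ) + 1)) := by
    intro n; rw [rpow_nat_eq hq0]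
  have hAequiv : ∀ n : ℕ, ((n : ℝ) + 1) * q ^ (((n : ℝ) + 1) * l) / (1 - q ^ ((n : ℝ) + 1))
      = ((n : ℝ) + 1) * z ^ (n + 1) / (1 - q ^ ((n : ℝ) + 1)) := by
    intro n; rw [rpow_nat_eq hq0]
  have hGsucc : ∀ n : ℕ, G (n + 1)
      = z * (((n : ℝ) + 1) ^ 2 * z ^ (n + 1) / (1 - q ^ ((n : ℝ) + 1))) := by
    intro n
    simp only [hG]
    push_cast
    rw [mul_comm z, mul_div_assoc, mul_div_assoc, mul_assoc]
    congr 1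
    ring
  have hBsum : Summable (fun n : ℕ => ((n : ℝ) + 1) ^ 2 * z ^ (n + 1) / (1 - q ^ ((n : ℝ) + 1))) :=
    (summable_master q hq0 hq1 l hl 2).congr hQequiv
  have hAsum : Summable (fun n : ℕ => ((n : ℝ) + 1) * z ^ (n + 1) / (1 - q ^ ((n : ℝ) + 1))) := by
    have h1 : Summable (fun n : ℕ =>
        ((n : ℝ) + 1) * q ^ (((n : ℝ) + 1) * l) / (1 - q ^ ((n : ℝ) + 1))) :=
      (summable_master q hq0 hq1 l hl 1).congr (fun n => by simp)
    exact h1.congr hAequiv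
  have hGsum : Summable G := by
    rw [← summable_nat_add_iff 1]
    exact (hBsum.mul_left z).congr (fun n => (hGsucc n).symm)
  have hzB : z * (∑' n : ℕ, ((n : ℝ) + 1) ^ 2 * z ^ (n + 1) / (1 - q ^ ((n : ℝ) + 1)))
      = ∑' m : ℕ, G m := by
    rw [← tsum_mul_left, Summable.tsum_eq_zero_add hGsum]
    have hG0 : G 0 = 0 := by simp [hG]
    rw [hG0, zero_add]
    congr 1; funext n; rw [hGsucc]
  have hterm : ∀ n : ℕ, ((n : ℝ) + 1) * z ^ (n + 1) / (1 - q ^ ((n : ℝ) + 1)) + G n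
      ≤ ((n : ℝ) + 1) ^ 2 * z ^ (n + 1) / (1 - q ^ ((n : ℝ) + 1)) := by
    intro n
    cases n with
    | zero => norm_num [hG]
    | succ m =>
        simp only [hG]
        have e1 : ((m + 1 : ℕ) : ℝ) + 1 = (m : ℝ) + 2 := by push_cast; ring
        have e1' : ((m + 1 : ℕ) : ℝ) = (m : ℝ) + 1 := by push_cast; ring
        have e2 : q ^ ((m : ℝ) + 2) = q ^ (m + 2) := by
          rw [show (m : ℝ) + 2 = ((m + 2 : ℕ) : ℝ) by push_cast; ring, Real.rpow_natCast]
        have e4 : q ^ ((m : ℝ) + 1) = q ^ (m + 1) := by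
          rw [show (m : ℝ) + 1 = ((m + 1 : ℕ) : ℝ) by push_cast; ring, Real.rpow_natCast]
        have ez : z ^ (m + 1 + 1) = z ^ (m + 2) := by ring
        rw [e1, e1', e2, e4, ez]
        have hd1' : (0:ℝ) < 1 - q ^ (m + 2) := by
          have h := denom_pos q hq0 hq1 (m + 1)
          rw [e1, e2] at h; exact h
        have hd0' : (0:ℝ) < 1 - q ^ (m + 1) := by
          have h := denom_pos q hq0 hq1 m
          have e : q ^ ((m : ℝ) + 1) = q ^ (m + 1) := e4
          rw [e] at h; exact h
        have hcoeff := coeff_lemma q hq0.le (m + 1)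
        have ec : q ^ (m + 1 + 1) = q ^ (m + 2) := by ring
        rw [ec] at hcoeff
        push_cast at hcoeff
        have hkey : ((m : ℝ) + 1) * (1 - q ^ (m + 2)) ≤ ((m : ℝ) + 2) * (1 - q ^ (m + 1)) := by
          nlinarith
        have hzp : (0:ℝ) < z ^ (m + 2) := by positivity
        rw [div_add_div _ _ hd1'.ne' hd0'.ne', div_le_div_iff₀ (mul_pos hd1' hd0') hd1']
        have hdiff : 0 ≤ ((m : ℝ) + 2) * (1 - q ^ (m + 1)) - ((m : ℝ) + 1) * (1 - q ^ (m + 2)) := by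
          linarith
        have h5 : 0 ≤ (1 - q ^ (m + 2)) * z ^ (m + 2) *
            (((m : ℝ) + 1) * (((m : ℝ) + 2) * (1 - q ^ (m + 1)) - ((m : ℝ) + 1) * (1 - q ^ (m + 2)))) :=
          mul_nonneg (mul_nonneg hd1'.le hzp.le) (mul_nonneg (by positivity) hdiff)
        nlinarith [h5]
  have hsum_le : (∑' n : ℕ, ((n : ℝ) + 1) * z ^ (n + 1) / (1 - q ^ ((n : ℝ) + 1)))
      + (∑' m, G m)
      ≤ ∑' n : ℕ, ((n : ℝ) + 1) ^ 2 * z ^ (n + 1) / (1 - q ^ ((n : ℝ) + 1)) := by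
    rw [← Summable.tsum_add hAsum hGsum]
    exact Summable.tsum_le_tsum hterm (hAsum.add hGsum) hBsum
  have hA : Aq q l = ∑' n : ℕ, ((n : ℝ) + 1) * z ^ (n + 1) / (1 - q ^ ((n : ℝ) + 1)) := by
    rw [Aq]; exact tsum_congr hAequiv
  have hB : Bq q l = ∑' n : ℕ, ((n : ℝ) + 1) ^ 2 * z ^ (n + 1) / (1 - q ^ ((n : ℝ) + 1)) := by
    rw [Bq]; exact tsum_congr hQequiv
  rw [hA, hB, sub_mul, one_mul]
  linarith [hzB, hsum_le]

end Part4

section Part5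
variable {q : ℝ}

private noncomputable def Sq (q y : ℝ) : ℝ :=
  ∑' n : ℕ, q ^ (((n : ℝ) + 1) * y) / (1 - q ^ ((n : ℝ) + 1))

private lemma hasDerivAt_Sq (hq0 : 0 < q) (hq1 : q < 1) {y : ℝ} (hy : 0 < y) :
    HasDerivAt (Sq q) (Real.log q * Aq q y) y := by
  apply (hasDerivAt_S hq0 hq1 hy).congr_of_eventuallyEq
  filter_upwards with z
  rfl

private lemma M_strictAnti (hq0 : 0 < q) (hq1 : q < 1) :
    StrictAntiOn (fun l : ℝ => l * Aq q l) (Set.Ioi 0) := by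
  have hM : ∀ l : ℝ, 0 < l →
      HasDerivAt (fun l : ℝ => l * Aq q l) (Aq q l + l * (Real.log q * Bq q l)) l := by
    intro l hl
    have h := (hasDerivAt_id l).mul (hasDerivAt_A hq0 hq1 hl)
    exact h.congr_deriv (by simp)
  apply strictAntiOn_of_deriv_neg (convex_Ioi 0)
  · intro x hx
    exact ((hM x hx).differentiableAt).continuousAt.continuousWithinAt
  · intro l hl
    rw [interior_Ioi] at hl
    rw [(hM l hl).deriv]
    have hz0 : 0 < q ^ l := Real.rpow_pos_of_pos hq0 l
    have hz1 : q ^ l < 1 := Real.rpow_lt_one hq0.le hq1 hl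
    have hlog : Real.log (q ^ l) < q ^ l - 1 :=
      Real.log_lt_sub_one_of_pos hz0 hz1.ne
    rw [Real.log_rpow hq0] at hlog
    have hA := A_le hq0 hq1 hl
    have hB := Bq_pos hq0 hq1 hl
    nlinarith [mul_pos hB (show (0:ℝ) < 1 - q ^ l by linarith)]

private lemma Sq_add_inv (hq0 : 0 < q) (hq1 : q < 1) {x : ℝ} (hx : 0 < x) (hx1 : x ≠ 1) :
    2 * Sq q 1 < Sq q x + Sq q x⁻¹ := by
  set Ψ : ℝ → ℝ := fun y => Sq q y + Sq q y⁻¹ with hΨdef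
  have hΨderiv : ∀ y : ℝ, 0 < y → HasDerivAt Ψ
      (Real.log q * Aq q y + Real.log q * Aq q y⁻¹ * (-(y ^ 2)⁻¹)) y := by
    intro y hy
    have h1 := hasDerivAt_Sq hq0 hq1 hy
    have h2 := (hasDerivAt_Sq hq0 hq1 (inv_pos.2 hy)).comp y (hasDerivAt_inv hy.ne')
    exact h1.add h2
  have hmono : StrictMonoOn Ψ (Set.Ici 1) := by
    apply strictMonoOn_of_deriv_pos (convex_Ici 1)
    · intro y hy
      have hy0 : (0:ℝ) < y := lt_of_lt_of_le one_pos hy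
      exact ((hΨderiv y hy0).differentiableAt).continuousAt.continuousWithinAt
    · intro y hy
      rw [interior_Ici] at hy
      have hy0 : (0:ℝ) < y := lt_trans one_pos hy
      rw [(hΨderiv y hy0).deriv]
      have hyinv : (0:ℝ) < y⁻¹ := inv_pos.2 hy0
      have hlt : y⁻¹ < y := by
        have h5 : y⁻¹ < 1 := inv_lt_one_of_one_lt₀ hy
        have h6 : (1:ℝ) < y := Set.mem_Ioi.1 hy
        linarith
      have hM := M_strictAnti hq0 hq1 (Set.mem_Ioi.2 hyinv) (Set.mem_Ioi.2 hy0) hlt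
      -- hM : y * Aq q y < y⁻¹ * Aq q y⁻¹
      have hL : Real.log q < 0 := Real.log_neg hq0 hq1
      have h3 : Aq q y < Aq q y⁻¹ * (y ^ 2)⁻¹ := by
        have h4 := mul_lt_mul_of_pos_left hM hyinv
        rw [← mul_assoc, inv_mul_cancel₀ hy0.ne', one_mul] at h4
        calc Aq q y < y⁻¹ * (y⁻¹ * Aq q y⁻¹) := h4
          _ = Aq q y⁻¹ * (y ^ 2)⁻¹ := by
              rw [sq, mul_inv]; ring
      nlinarith [mul_lt_mul_of_neg_left h3 hL]
  have hΨ1 : Ψ 1 = 2 * Sq q 1 := by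
    rw [hΨdef]; simp; ring
  rcases lt_or_gt_of_ne hx1 with h | h
  · have hx' : 1 < x⁻¹ := (one_lt_inv₀ hx).2 h
    have hmain := hmono (Set.self_mem_Ici) (Set.mem_Ici.2 hx'.le) hx'
    rw [hΨ1] at hmain
    have hΨx : Ψ x⁻¹ = Sq q x + Sq q x⁻¹ := by
      rw [hΨdef]; simp [inv_inv]; ring
    rw [hΨx] at hmain
    exact hmain
  · have hmain := hmono (Set.self_mem_Ici) (Set.mem_Ici.2 h.le) h
    rw [hΨ1] at hmain
    exact hmain

end Part5

/-- The `q`-digamma function `ψ_q(x)`. For `0 < q < 1`,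
`ψ_q(x) = -log(1-q) + (log q) ∑_{n≥1} q^{n x}/(1-q^n)`; for `q > 1`,
`ψ_q(x) = -log(q-1) + (log q)(x - 1/2 - ∑_{n≥1} q^{-n x}/(1-q^{-n}))`;
for `q = 1` it is the classical digamma function `(log ∘ Γ)'`. -/
noncomputable def qDigamma (q x : ℝ) : ℝ :=
  if q < 1 then
    -Real.log (1 - q) +
      Real.log q * ∑' n : ℕ, q ^ (((n : ℝ) + 1) * x) / (1 - q ^ ((n : ℝ) + 1))
  else if 1 < q then
    -Real.log (q - 1) +
      Real.log q *
        (x - 1 / 2 - ∑' n : ℕ, q ^ (-(((n : ℝ) + 1) * x)) / (1 - q ^ (-((n : ℝ) + 1))))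
  else
    deriv (fun y : ℝ => Real.log (Real.Gamma y)) x

/-- For every `0 < q < 1` and every `x > 0` with `x ≠ 1`,
`ψ_q(x) + ψ_q(1/x) < 2·ψ_q(1)`. -/
theorem qDigamma_add_inv_lt (q : ℝ) (hq0 : 0 < q) (hq1 : q < 1)
    (x : ℝ) (hx : 0 < x) (hx1 : x ≠ 1) :
    qDigamma q x + qDigamma q (1 / x) < 2 * qDigamma q 1 := by
  have key := Sq_add_inv hq0 hq1 hx hx1
  have hL : Real.log q < 0 := Real.log_neg hq0 hq1
  simp only [qDigamma, if_pos hq1]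
  show -Real.log (1 - q) + Real.log q * Sq q x
      + (-Real.log (1 - q) + Real.log q * Sq q (1 / x))
      < 2 * (-Real.log (1 - q) + Real.log q * Sq q 1)
  rw [one_div]
  nlinarith [mul_neg_of_neg_of_pos hL
    (show (0:ℝ) < Sq q x + Sq q x⁻¹ - 2 * Sq q 1 by linarith)]
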